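/- Let 𝔮 be a probability measure on a measurable space (Ω,Σ) and let 𝔭 be a probability measure with 𝔭 ≪ 𝔮 and H(𝔭|𝔮) < ∞. Then the Luxemburg norm of the Radon–Nikodym derivative d𝔭/d𝔮 with respect to the Young function θ*(s) = s·log s − s + 1 (for s > 0, with θ*(0) := 1) satisfies inf{ b > 0 : ∫ θ*( (d𝔭/d𝔮)/b ) d𝔮 ≤ 1 } = e^{H(𝔭|𝔮) − 1}. -/

import Mathlib

open MeasureTheory Real

/-- The Young function `θ*(s) = s log s - s + 1` (for `s ≥ 0`; note that with
Lean's convention `0 * log 0 = 0` this formula also gives `θ*(0) = 1`). -/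
noncomputable def thetaStar (s : ℝ) : ℝ := s * Real.log s - s + 1

/-- the Luxemburg norm of the Radon–Nikodym derivative `d𝔭/d𝔮`
with respect to the Young function `θ*(s) = s log s - s + 1` equals
`e^{H(𝔭|𝔮) - 1}`, where `H(𝔭|𝔮) = ∫ log (d𝔭/d𝔮) d𝔭` is the (finite) relative
entropy. -/
theorem luxemburg_norm_rnDeriv_eq_exp_entropy
    {Ω : Type*} [MeasurableSpace Ω]
    (𝔭 𝔮 : Measure Ω) [IsProbabilityMeasure 𝔭] [IsProbabilityMeasure 𝔮]
    (hac : 𝔭 ≪ 𝔮)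
    (hH : Integrable (fun x => Real.log ((𝔭.rnDeriv 𝔮 x).toReal)) 𝔭) :
    sInf {b : ℝ | 0 < b ∧ ∫ x, thetaStar ((𝔭.rnDeriv 𝔮 x).toReal / b) ∂𝔮 ≤ 1}
      = Real.exp ((∫ x, Real.log ((𝔭.rnDeriv 𝔮 x).toReal) ∂𝔭) - 1) := by
  set f : Ω → ℝ := fun x => (𝔭.rnDeriv 𝔮 x).toReal with hf_def
  set H : ℝ := ∫ x, Real.log (f x) ∂𝔭 with hH_def
  have hf_int : Integrable f 𝔮 := Measure.integrable_toReal_rnDeriv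
  have hf1 : ∫ x, f x ∂𝔮 = 1 := by
    rw [Measure.integral_toReal_rnDeriv hac]; simp
  have hflog_int : Integrable (fun x => f x * Real.log (f x)) 𝔮 := by
    have := (integrable_rnDeriv_smul_iff (E := ℝ)
      (f := fun x => Real.log (f x)) hac).mpr hH
    simpa [smul_eq_mul] using this
  have hH_eq : H = ∫ x, f x * Real.log (f x) ∂𝔮 := by
    rw [hH_def, ← integral_rnDeriv_smul (E := ℝ) hac]
    simp [smul_eq_mul]
    rfl
  -- compute the integral for each b > 0
  have hint : ∀ b : ℝ, 0 < b →
      ∫ x, thetaStar (f x / b) ∂𝔮 = (H - Real.log b - 1) / b + 1 := by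
    intro b hb
    have hpt : ∀ x, thetaStar (f x / b)
        = (f x * Real.log (f x)) * b⁻¹ - f x * (Real.log b / b) - f x * b⁻¹ + 1 := by
      intro x
      have hfx : 0 ≤ f x := ENNReal.toReal_nonneg
      rcases eq_or_lt_of_le hfx with h0 | h0
      · simp [thetaStar, ← h0]
      · have : Real.log (f x / b) = Real.log (f x) - Real.log b :=
          Real.log_div h0.ne' hb.ne'
        simp only [thetaStar, this]
        field_simp
    have h1 : Integrable (fun x => f x * Real.log (f x) * b⁻¹) 𝔮 := hflog_int.mul_const _
    have h2 : Integrable (fun x => f x * (Real.log b / b)) 𝔮 := hf_int.mul_const _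
    have h3 : Integrable (fun x => f x * b⁻¹) 𝔮 := hf_int.mul_const _
    have h12 : Integrable (fun x => f x * Real.log (f x) * b⁻¹ - f x * (Real.log b / b)) 𝔮 :=
      h1.sub h2
    have h123 : Integrable
        (fun x => f x * Real.log (f x) * b⁻¹ - f x * (Real.log b / b) - f x * b⁻¹) 𝔮 :=
      h12.sub h3
    rw [show (fun x => thetaStar (f x / b)) = fun x =>
        (f x * Real.log (f x)) * b⁻¹ - f x * (Real.log b / b) - f x * b⁻¹ + 1 from
      funext hpt]
    rw [integral_add h123 (integrable_const 1), integral_sub h12 h3, integral_sub h1 h2,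
      integral_mul_const, integral_mul_const, integral_mul_const, hf1, ← hH_eq]
    simp only [integral_const, measure_univ, probReal_univ, ENNReal.toReal_one, one_smul, one_mul]
    field_simp
  have hset : {b : ℝ | 0 < b ∧ ∫ x, thetaStar (f x / b) ∂𝔮 ≤ 1}
      = Set.Ici (Real.exp (H - 1)) := by
    ext b
    simp only [Set.mem_setOf_eq, Set.mem_Ici]
    constructor
    · rintro ⟨hb, hle⟩
      rw [hint b hb] at hle
      have h2 : (H - Real.log b - 1) / b ≤ 0 := by linarith
      have h3 : H - Real.log b - 1 ≤ 0 := by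
        by_contra h
        push_neg at h
        exact absurd (div_pos h hb) (not_lt.mpr h2)
      have : H - 1 ≤ Real.log b := by linarith
      calc Real.exp (H - 1) ≤ Real.exp (Real.log b) := Real.exp_le_exp.mpr this
        _ = b := Real.exp_log hb
    · intro hb
      have hbpos : 0 < b := lt_of_lt_of_le (Real.exp_pos _) hb
      refine ⟨hbpos, ?_⟩
      rw [hint b hbpos]
      have h3 : H - 1 ≤ Real.log b := (Real.le_log_iff_exp_le hbpos).mpr hb
      have : (H - Real.log b - 1) / b ≤ 0 :=
        div_nonpos_of_nonpos_of_nonneg (by linarith) hbpos.le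
      linarith
  rw [hset, csInf_Ici]
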